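/- Let α, β ∈ ℤ^s be linearly independent vectors, each having both positive and negative entries, such that γ = α + β also has both positive and negative entries. Then the binomial x^{α₊} − x^{α₋} does not divide the binomial x^{γ₊} − x^{γ₋} in the polynomial ring K[x_1,…,x_s]. -/

import Mathlib

open MvPolynomial

/-- For `v ∈ ℤ^s`, the monomial `x^{v₊}` with exponents the positive part of `v`. -/
noncomputable def posMonomial {s : ℕ} (K : Type*) [Field K] (v : Fin s → ℤ) :
    MvPolynomial (Fin s) K :=
  ∏ i, X i ^ (v i).toNat

/-- For `v ∈ ℤ^s`, the binomial `x^{v₊} - x^{v₋}`. -/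
noncomputable def binomOf {s : ℕ} (K : Type*) [Field K] (v : Fin s → ℤ) :
    MvPolynomial (Fin s) K :=
  posMonomial K v - posMonomial K (-v)

/-- `v` has both positive and negative entries. -/
def HasMixedSigns {s : ℕ} (v : Fin s → ℤ) : Prop :=
  (∃ i, 0 < v i) ∧ (∃ i, v i < 0)

open LaurentPolynomial in
lemma T_ne_T {K : Type*} [Field K] {a b : ℤ} (h : a ≠ b) :
    (T a : K[T;T⁻¹]) ≠ T b := by
  intro heq
  have := congrArg (fun p : K[T;T⁻¹] => p.coeff a) heq
  simp only [T_apply, if_pos rfl, Ne.symm h, if_false] at this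
  exact one_ne_zero this

open LaurentPolynomial in
lemma prod_T {K : Type*} [Field K] {ι : Type*} (t : Finset ι) (f : ι → ℤ) :
    ∏ i ∈ t, (T (f i) : K[T;T⁻¹]) = T (∑ i ∈ t, f i) := by
  classical
  induction t using Finset.induction with
  | empty => simp [T_zero]
  | insert _ _ hx ih =>
    rw [Finset.prod_insert hx, Finset.sum_insert hx, T_add, ih]

open LaurentPolynomial in
lemma aeval_posMonomial {s : ℕ} (K : Type*) [Field K] (w v : Fin s → ℤ) :
    aeval (fun i => (T (w i) : K[T;T⁻¹])) (posMonomial K v)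
      = T (∑ i, w i * (v i).toNat) := by
  rw [posMonomial, map_prod, ← prod_T]
  refine Finset.prod_congr rfl fun i _ => ?_
  rw [map_pow, aeval_X, T_pow, mul_comm]

open LaurentPolynomial in
lemma aeval_binomOf {s : ℕ} (K : Type*) [Field K] (w v : Fin s → ℤ)
    (hw : ∑ i, w i * v i = 0) :
    aeval (fun i => (T (w i) : K[T;T⁻¹])) (binomOf K v) = 0 := by
  rw [binomOf, map_sub, aeval_posMonomial, aeval_posMonomial, sub_eq_zero]
  congr 1
  have : ∑ i, w i * (v i).toNat - ∑ i, w i * ((-v) i).toNat = ∑ i, w i * v i := by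
    rw [← Finset.sum_sub_distrib]
    refine Finset.sum_congr rfl fun i _ => ?_
    rw [← mul_sub, Pi.neg_apply, Int.toNat_sub_toNat_neg]
  omega

open LaurentPolynomial in
lemma aeval_binomOf_ne {s : ℕ} (K : Type*) [Field K] (w v : Fin s → ℤ)
    (hw : ∑ i, w i * v i ≠ 0) :
    aeval (fun i => (T (w i) : K[T;T⁻¹])) (binomOf K v) ≠ 0 := by
  rw [binomOf, map_sub, aeval_posMonomial, aeval_posMonomial, sub_ne_zero]
  apply T_ne_T
  intro h
  apply hw
  have : ∑ i, w i * (v i).toNat - ∑ i, w i * ((-v) i).toNat = ∑ i, w i * v i := by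
    rw [← Finset.sum_sub_distrib]
    refine Finset.sum_congr rfl fun i _ => ?_
    rw [← mul_sub, Pi.neg_apply, Int.toNat_sub_toNat_neg]
  omega

/-- If `α, β ∈ ℤ^s` are linearly independent, each with both positive and
negative entries, and `γ = α + β` also has both positive and negative entries, then
`x^{α₊} - x^{α₋}` does not divide `x^{γ₊} - x^{γ₋}` in `K[x_1, …, x_s]`. -/
theorem toric_splittings_stmt1 {s : ℕ} (K : Type*) [Field K] (α β : Fin s → ℤ)
    (hind : LinearIndependent ℤ ![α, β])
    (hα : HasMixedSigns α) (hβ : HasMixedSigns β) (hγ : HasMixedSigns (α + β)) :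
    ¬ (binomOf K α ∣ binomOf K (α + β)) := by
  intro hdvd
  set γ : Fin s → ℤ := α + β with hγdef
  -- α and γ are linearly independent
  have hindγ : ∀ c d : ℤ, c • α + d • γ = 0 → c = 0 ∧ d = 0 := by
    intro c d h
    have h' : (c + d) • α + d • β = 0 := by
      rw [hγdef] at h
      rw [add_smul]
      rw [smul_add] at h
      linear_combination (norm := module) h
    obtain ⟨h1, h2⟩ := LinearIndependent.pair_iff.mp hind (c + d) d h'
    constructor <;> omega
  -- construct the weight vector w
  set A : ℤ := ∑ i, α i * α i with hA
  set B : ℤ := ∑ i, α i * γ i with hB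
  set w : Fin s → ℤ := fun i => B * α i - A * γ i with hw
  have hwα : ∑ i, w i * α i = 0 := by
    simp only [hw, sub_mul, Finset.sum_sub_distrib, mul_assoc, ← Finset.mul_sum]
    rw [hA, hB]
    have : ∑ i, γ i * α i = ∑ i, α i * γ i :=
      Finset.sum_congr rfl fun i _ => mul_comm _ _
    rw [this]; ring
  have hApos : 0 < A := by
    obtain ⟨⟨i, hi⟩, -⟩ := hα
    have h1 : 0 < α i * α i := mul_pos hi hi
    have h2 : ∀ j ∈ Finset.univ, 0 ≤ α j * α j := fun j _ => mul_self_nonneg _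
    calc 0 < α i * α i := h1
    _ ≤ A := Finset.single_le_sum h2 (Finset.mem_univ i)
  have hwγ : ∑ i, w i * γ i ≠ 0 := by
    intro hzero
    -- then ∑ w i ^ 2 = 0, so w = 0, giving a linear relation between α and γ
    have hww : ∑ i, w i * w i = 0 := by
      have : ∑ i, w i * w i = B * (∑ i, w i * α i) - A * (∑ i, w i * γ i) := by
        rw [Finset.mul_sum, Finset.mul_sum, ← Finset.sum_sub_distrib]
        refine Finset.sum_congr rfl fun i _ => ?_
        rw [hw]; ring
      rw [this, hwα, hzero]; ring
    have hw0 : ∀ i, w i = 0 := by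
      intro i
      have h2 : ∀ j ∈ Finset.univ, 0 ≤ w j * w j := fun j _ => mul_self_nonneg _
      have := Finset.single_le_sum h2 (Finset.mem_univ i)
      nlinarith [mul_self_nonneg (w i)]
    have hrel : B • α + (-A) • γ = 0 := by
      funext i
      have := hw0 i
      simp only [hw] at this
      simp only [Pi.add_apply, Pi.smul_apply, smul_eq_mul, Pi.zero_apply]
      linarith
    obtain ⟨-, hA0⟩ := hindγ B (-A) hrel
    omega
  -- evaluate via x i ↦ T (w i)
  obtain ⟨h, hh⟩ := hdvd
  have := congrArg (MvPolynomial.aeval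
      (fun i => (LaurentPolynomial.T (w i) : LaurentPolynomial K))) hh
  rw [map_mul, aeval_binomOf K w α hwα] at this
  rw [zero_mul] at this
  exact aeval_binomOf_ne K w γ hwγ this
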